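/- arXiv:0906.4706 — 2 statements merged into one kernel-verified Lean document; each statement's English description precedes it below -/
import Mathlib

section
/- Let (H, V) be a violator space and (Ĥ, V̂) its multiset extension with respect to multiplicities μ: Ĥ consists of μ_h copies of each h ∈ H, and V̂(F̂) = φ(V(ψ(F̂))), where ψ collapses copies to original elements and φ expands elements to all their copies. Then (Ĥ, V̂) is a violator space, and dim(Ĥ, V̂) = dim(H, V). -/
open Finset

/-- A violator space: a finite set `H` together with a violator mapping `V : 2^H → 2^H`
satisfying consistency and locality. -/
structure ViolatorSpace (H : Type*) [Fintype H] [DecidableEq H] where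
  V : Finset H → Finset H
  consistency : ∀ G : Finset H, Disjoint G (V G)
  locality : ∀ F G : Finset H, F ⊆ G → Disjoint G (V F) → V G = V F

/-- `B` is a basis of `G` for the mapping `W`: a minimal subset of `G` with the
same violators as `G`. -/
def IsBasisOf {H : Type*}
    (W : Finset H → Finset H) (B G : Finset H) : Prop :=
  B ⊆ G ∧ W B = W G ∧ ∀ B' : Finset H, B' ⊂ B → W B' ≠ W G

/-- `φ` expands each element `h ∈ F` to its `μ h` copies `(h, 0), …, (h, μ h - 1)`. -/
def phiMap {H : Type*} [Fintype H] [DecidableEq H] (μ : H → ℕ) (F : Finset H) :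
    Finset (H × ℕ) :=
  F.biUnion (fun h => (Finset.range (μ h)).image (fun j => (h, j)))

/-- The ground multiset `Ĥ = φ(H)` consisting of `μ h` copies of each `h ∈ H`. -/
def hatH {H : Type*} [Fintype H] [DecidableEq H] (μ : H → ℕ) : Finset (H × ℕ) :=
  phiMap μ univ

/-- `ψ` collapses a set of copies to the set of original elements:
`ψ(F̂) = {h ∈ H : φ({h}) ∩ F̂ ≠ ∅}`. -/
def psiMap {H : Type*} [Fintype H] [DecidableEq H] (μ : H → ℕ)
    (Fhat : Finset (H × ℕ)) : Finset H :=
  univ.filter (fun h => (phiMap μ {h} ∩ Fhat).Nonempty)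

/-- The multiset extension of the violator mapping: `V̂(F̂) = φ(V(ψ(F̂)))`. -/
def Vhat {H : Type*} [Fintype H] [DecidableEq H]
    (VS : ViolatorSpace H) (μ : H → ℕ) (Fhat : Finset (H × ℕ)) : Finset (H × ℕ) :=
  phiMap μ (VS.V (psiMap μ Fhat))

section AuxLemmas

variable {H : Type*} [Fintype H] [DecidableEq H] {μ : H → ℕ}

lemma mem_phiMap {x : H × ℕ} {F : Finset H} :
    x ∈ phiMap μ F ↔ x.1 ∈ F ∧ x.2 < μ x.1 := by
  obtain ⟨a, b⟩ := x
  simp only [phiMap, mem_biUnion, mem_image, mem_range]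
  constructor
  · rintro ⟨h, hF, j, hj, h1, h2⟩
    simp_all [Prod.ext_iff]
  · rintro ⟨hF, hj⟩; exact ⟨a, hF, b, hj, rfl⟩

lemma mem_psiMap {h : H} {Fhat : Finset (H × ℕ)} :
    h ∈ psiMap μ Fhat ↔ ∃ j, j < μ h ∧ (h, j) ∈ Fhat := by
  simp only [psiMap, mem_filter, mem_univ, true_and, Finset.Nonempty, mem_inter]
  constructor
  · rintro ⟨⟨a, b⟩, hx1, hx2⟩
    rw [mem_phiMap] at hx1
    obtain ⟨h1, h2⟩ := hx1
    simp only [mem_singleton] at h1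
    subst h1
    exact ⟨b, h2, hx2⟩
  · rintro ⟨j, hj, hmem⟩
    exact ⟨(h, j), mem_phiMap.2 ⟨mem_singleton_self h, hj⟩, hmem⟩

lemma psi_phi (hμ : ∀ h, 1 ≤ μ h) (F : Finset H) : psiMap μ (phiMap μ F) = F := by
  ext h
  rw [mem_psiMap]
  constructor
  · rintro ⟨j, hj, hmem⟩
    exact (mem_phiMap.1 hmem).1
  · intro hF
    exact ⟨0, hμ h, mem_phiMap.2 ⟨hF, hμ h⟩⟩

lemma psi_mono {Fhat Ghat : Finset (H × ℕ)} (h : Fhat ⊆ Ghat) :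
    psiMap μ Fhat ⊆ psiMap μ Ghat := by
  intro a ha
  rw [mem_psiMap] at ha ⊢
  obtain ⟨j, hj, hm⟩ := ha
  exact ⟨j, hj, h hm⟩

lemma mem_hatH {x : H × ℕ} : x ∈ hatH μ ↔ x.2 < μ x.1 := by
  rw [hatH, mem_phiMap]; simp

lemma Vhat_consistency {VS : ViolatorSpace H} {Fhat : Finset (H × ℕ)}
    (hF : Fhat ⊆ hatH μ) : Disjoint Fhat (Vhat VS μ Fhat) := by
  rw [Finset.disjoint_left]
  rintro ⟨a, b⟩ hmem hv
  rw [Vhat, mem_phiMap] at hv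
  have ha : a ∈ psiMap μ Fhat :=
    mem_psiMap.2 ⟨b, mem_hatH.1 (hF hmem), hmem⟩
  exact (Finset.disjoint_left.1 (VS.consistency (psiMap μ Fhat))) ha hv.1

lemma Vhat_locality {VS : ViolatorSpace H} {Fhat Ghat : Finset (H × ℕ)}
    (hFG : Fhat ⊆ Ghat) (_hG : Ghat ⊆ hatH μ)
    (hdisj : Disjoint Ghat (Vhat VS μ Fhat)) : Vhat VS μ Ghat = Vhat VS μ Fhat := by
  have hd : Disjoint (psiMap μ Ghat) (VS.V (psiMap μ Fhat)) := by
    rw [Finset.disjoint_left]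
    intro h hG' hV
    obtain ⟨j, hj, hmem⟩ := mem_psiMap.1 hG'
    exact (Finset.disjoint_left.1 hdisj) hmem (mem_phiMap.2 ⟨hV, hj⟩)
  rw [Vhat, Vhat, VS.locality (psiMap μ Fhat) (psiMap μ Ghat) (psi_mono hFG) hd]

end AuxLemmas

/-- The multiset extension `(Ĥ, V̂)` of a violator space `(H, V)` with respect to
multiplicities `μ ≥ 1` is a violator space (consistency and locality on the
ground set `Ĥ`), and `dim(Ĥ, V̂) = dim(H, V)`. -/
theorem multiset_extension_violator_space {H : Type*} [Fintype H] [DecidableEq H]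
    (VS : ViolatorSpace H) (μ : H → ℕ) (hμ : ∀ h, 1 ≤ μ h) (d : ℕ)
    (hdim : (∀ G B : Finset H, IsBasisOf VS.V B G → B.card ≤ d) ∧
      (∃ G B : Finset H, IsBasisOf VS.V B G ∧ B.card = d)) :
    (∀ Fhat : Finset (H × ℕ), Fhat ⊆ hatH μ → Disjoint Fhat (Vhat VS μ Fhat)) ∧
    (∀ Fhat Ghat : Finset (H × ℕ), Fhat ⊆ Ghat → Ghat ⊆ hatH μ →
      Disjoint Ghat (Vhat VS μ Fhat) → Vhat VS μ Ghat = Vhat VS μ Fhat) ∧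
    (∀ Ghat Bhat : Finset (H × ℕ), Ghat ⊆ hatH μ →
      IsBasisOf (Vhat VS μ) Bhat Ghat → Bhat.card ≤ d) ∧
    (∃ Ghat Bhat : Finset (H × ℕ), Ghat ⊆ hatH μ ∧
      IsBasisOf (Vhat VS μ) Bhat Ghat ∧ Bhat.card = d) := by
  -- φ is injective (given μ ≥ 1)
  have phi_inj : ∀ F F' : Finset H, phiMap μ F = phiMap μ F' → F = F' := by
    intro F F' h
    have := congrArg (psiMap μ) h
    rwa [psi_phi hμ, psi_phi hμ] at this
  obtain ⟨hub, G0, B0, hB0, hcard0⟩ := hdim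
  refine ⟨fun Fhat hF => Vhat_consistency hF,
    fun Fhat Ghat hFG hG hd => Vhat_locality hFG hG hd, ?_, ?_⟩
  · -- upper bound
    rintro Ghat Bhat hG ⟨hsub, heq, hmin⟩
    have hBh : Bhat ⊆ hatH μ := hsub.trans hG
    -- Bhat contains at most one copy of each element
    have one_copy : ∀ x ∈ Bhat, ∀ y ∈ Bhat, x.1 = y.1 → x = y := by
      intro x hx y hy hxy
      by_contra hne
      -- remove y, keep the same ψ, contradict minimality
      have hss : Bhat \ {y} ⊂ Bhat := by
        apply Finset.sdiff_ssubset (by simpa using hy)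
        simp
      refine hmin (Bhat \ {y}) hss ?_
      have hpsi : psiMap μ (Bhat \ {y}) = psiMap μ Bhat := by
        apply Finset.Subset.antisymm (psi_mono (Finset.sdiff_subset))
        intro h hh
        obtain ⟨j, hj, hmem⟩ := mem_psiMap.1 hh
        by_cases hjy : (h, j) = y
        · refine mem_psiMap.2 ⟨x.2, ?_, ?_⟩
          · have : x.1 = h := by rw [hxy, ← hjy]
            rw [← this]; exact mem_hatH.1 (hBh hx)
          · have hx1 : x.1 = h := by rw [hxy, ← hjy]
            have : (x.1, x.2) ∈ Bhat \ {y} := by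
              rw [mem_sdiff, mem_singleton]
              exact ⟨by simpa using hx, by simpa [Prod.ext_iff] using hne⟩
            rwa [hx1] at this
        · exact mem_psiMap.2 ⟨j, hj, by rw [mem_sdiff, mem_singleton]; exact ⟨hmem, hjy⟩⟩
      calc Vhat VS μ (Bhat \ {y}) = Vhat VS μ Bhat := by rw [Vhat, Vhat, hpsi]
        _ = Vhat VS μ Ghat := heq
    -- card Bhat = card (ψ Bhat)
    have hcard : Bhat.card = (psiMap μ Bhat).card := by
      apply le_antisymm
      · rw [← Finset.card_image_of_injOn (f := Prod.fst)
          (fun x hx y hy hxy => one_copy x hx y hy hxy)]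
        apply Finset.card_le_card
        intro a ha
        obtain ⟨⟨x1, x2⟩, hx, rfl⟩ := Finset.mem_image.1 ha
        exact mem_psiMap.2 ⟨x2, mem_hatH.1 (hBh hx), hx⟩
      · -- ψ Bhat injects into Bhat: pick a copy for each element
        have : psiMap μ Bhat ⊆ Bhat.image Prod.fst := by
          intro a ha
          obtain ⟨j, hj, hm⟩ := mem_psiMap.1 ha
          exact Finset.mem_image.2 ⟨(a, j), hm, rfl⟩
        calc (psiMap μ Bhat).card ≤ (Bhat.image Prod.fst).card := Finset.card_le_card this
          _ ≤ Bhat.card := Finset.card_image_le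
    rw [hcard]
    -- ψ Bhat is a basis of ψ Ghat
    apply hub (psiMap μ Ghat) (psiMap μ Bhat)
    refine ⟨psi_mono hsub, phi_inj _ _ heq, ?_⟩
    intro B' hB' hVeq
    -- build Bhat' ⊂ Bhat with ψ Bhat' = B'
    set Bhat' := Bhat.filter (fun x => x.1 ∈ B') with hBhat'
    have hpsiB' : psiMap μ Bhat' = B' := by
      apply Finset.Subset.antisymm
      · intro a ha
        obtain ⟨j, hj, hm⟩ := mem_psiMap.1 ha
        exact (Finset.mem_filter.1 hm).2
      · intro a ha
        obtain ⟨j, hj, hm⟩ := mem_psiMap.1 (hB'.1 ha)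
        exact mem_psiMap.2 ⟨j, hj, Finset.mem_filter.2 ⟨hm, ha⟩⟩
    have hss : Bhat' ⊂ Bhat := by
      refine ⟨Finset.filter_subset _ _, fun hcon => ?_⟩
      obtain ⟨a, haB, haB'⟩ := Finset.exists_of_ssubset hB'
      obtain ⟨j, hj, hm⟩ := mem_psiMap.1 haB
      exact haB' (Finset.mem_filter.1 (hcon hm)).2
    apply hmin Bhat' hss
    rw [Vhat, hpsiB', hVeq]; rfl
  · -- existence
    refine ⟨phiMap μ G0, B0.image (fun h => (h, 0)), ?_, ⟨?_, ?_, ?_⟩, ?_⟩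
    · intro x hx; rw [mem_hatH]; exact (mem_phiMap.1 hx).2
    · intro x hx
      obtain ⟨a, ha, rfl⟩ := Finset.mem_image.1 hx
      exact mem_phiMap.2 ⟨hB0.1 ha, hμ a⟩
    · have hpsiB : psiMap μ (B0.image (fun h => (h, 0))) = B0 := by
        ext a
        rw [mem_psiMap]
        constructor
        · rintro ⟨j, hj, hm⟩
          obtain ⟨b, hb, hbe⟩ := Finset.mem_image.1 hm
          obtain ⟨h1, h2⟩ := Prod.ext_iff.1 hbe
          simp only at h1; rwa [← h1]
        · intro ha
          exact ⟨0, hμ a, Finset.mem_image.2 ⟨a, ha, rfl⟩⟩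
      rw [Vhat, Vhat, hpsiB, psi_phi hμ, hB0.2.1]
    · intro Bhat' hss hVeq
      have hpsiB : psiMap μ (B0.image (fun h => (h, 0))) = B0 := by
        ext a
        rw [mem_psiMap]
        constructor
        · rintro ⟨j, hj, hm⟩
          obtain ⟨b, hb, hbe⟩ := Finset.mem_image.1 hm
          obtain ⟨h1, h2⟩ := Prod.ext_iff.1 hbe
          simp only at h1; rwa [← h1]
        · intro ha
          exact ⟨0, hμ a, Finset.mem_image.2 ⟨a, ha, rfl⟩⟩
      have hVeq' : VS.V (psiMap μ Bhat') = VS.V G0 := by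
        have : Vhat VS μ Bhat' = Vhat VS μ (phiMap μ G0) := hVeq
        rw [Vhat, Vhat, psi_phi hμ] at this
        exact phi_inj _ _ this
      have hψss : psiMap μ Bhat' ⊂ B0 := by
        refine ⟨?_, ?_⟩
        · rw [← hpsiB]; exact psi_mono hss.1
        · intro hcon
          obtain ⟨y, hyB, hyB'⟩ := Finset.exists_of_ssubset hss
          obtain ⟨a, ha, rfl⟩ := Finset.mem_image.1 hyB
          have : a ∈ psiMap μ Bhat' := hcon ha
          obtain ⟨j, hj, hm⟩ := mem_psiMap.1 this
          have : (a, j) ∈ B0.image (fun h => (h, 0)) := hss.1 hm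
          obtain ⟨b, hb, hbe⟩ := Finset.mem_image.1 this
          obtain ⟨h1, h2⟩ := Prod.ext_iff.1 hbe
          simp only at h1 h2
          subst h1; rw [← h2] at hm
          exact hyB' hm
      exact hB0.2.2 (psiMap μ Bhat') hψss hVeq'
    · rw [Finset.card_image_of_injective _ (fun a b h => (Prod.ext_iff.1 h).1), hcard0]
end

section
/- The violation pattern of a nondegenerate violator space is a hypercube partition, and conversely any hypercube partition P of 2^H is the violation pattern of some nondegenerate violator space (H, V): defining V(G) = H \ B' where [B, B'] is the interval of P containing G yields a nondegenerate violator space whose equivalence classes under V(F) = V(G) are exactly the intervals of P. -/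
open Finset

/-- The interval `[A, B] = {C : A ⊆ C ⊆ B}` of the hypercube `2^H`. -/
def cubeInterval {H : Type*} (A B : Finset H) : Set (Finset H) :=
  {C | A ⊆ C ∧ C ⊆ B}

/-- A hypercube partition: a partition of the vertices `2^H` of the hypercube
all of whose classes are intervals (i.e. subcubes). -/
def IsHypercubePartition {H : Type*} (P : Set (Set (Finset H))) : Prop :=
  Setoid.IsPartition P ∧
    ∀ c ∈ P, ∃ A B : Finset H, A ⊆ B ∧ c = cubeInterval A B

/-- The violation pattern of a violator space: the partition of `2^H` into the
equivalence classes of the relation `F ~ G ↔ V(F) = V(G)`. -/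
def violationPattern {H : Type*} [Fintype H] [DecidableEq H]
    (VS : ViolatorSpace H) : Set (Set (Finset H)) :=
  {c | ∃ G : Finset H, c = {F : Finset H | VS.V F = VS.V G}}

/-- Endpoints of a (nonempty) cube interval are determined by the interval. -/
lemma cubeInterval_endpoints {H : Type*} {A B A' B' : Finset H} (h : A ⊆ B) (h' : A' ⊆ B')
    (he : cubeInterval A B = cubeInterval A' B') : A = A' ∧ B = B' := by
  have hA : A ∈ cubeInterval A' B' := he ▸ (⟨subset_rfl, h⟩ : A ∈ cubeInterval A B)
  have hA' : A' ∈ cubeInterval A B := he.symm ▸ (⟨subset_rfl, h'⟩ : A' ∈ cubeInterval A' B')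
  have hB : B ∈ cubeInterval A' B' := he ▸ (⟨h, subset_rfl⟩ : B ∈ cubeInterval A B)
  have hB' : B' ∈ cubeInterval A B := he.symm ▸ (⟨h', subset_rfl⟩ : B' ∈ cubeInterval A' B')
  exact ⟨subset_antisymm hA'.1 hA.1, subset_antisymm hB.2 hB'.2⟩

/-- **Hypercube Partition Theorem.** The violation pattern of a nondegenerate
violator space (one where every subset has a unique basis) is a hypercube
partition; conversely, every hypercube partition `P` of `2^H` is the violation
pattern of some nondegenerate violator space: setting `V(G) = H \ B'`, where
`[B, B']` is the interval of `P` containing `G`, yields a nondegenerate violator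
space whose violation pattern is exactly `P`. -/
theorem hypercube_partition_theorem {H : Type*} [Fintype H] [DecidableEq H] :
    (∀ VS : ViolatorSpace H,
      (∀ G : Finset H, ∃! B : Finset H, IsBasisOf VS.V B G) →
      IsHypercubePartition (violationPattern VS)) ∧
    (∀ P : Set (Set (Finset H)), IsHypercubePartition P →
      ∃ VS : ViolatorSpace H,
        (∀ G A B : Finset H, A ⊆ B → cubeInterval A B ∈ P →
          G ∈ cubeInterval A B → VS.V G = univ \ B) ∧
        (∀ G : Finset H, ∃! B : Finset H, IsBasisOf VS.V B G) ∧
        violationPattern VS = P) := by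
  constructor
  · -- Direction 1: nondegenerate violator space gives hypercube partition
    intro VS hnd
    choose bas hbas hbuniq using hnd
    -- the closure of G : the largest set with the same violators
    set cl : Finset H → Finset H := fun G => univ \ VS.V G with hcldef
    have hGcl : ∀ G : Finset H, G ⊆ cl G := by
      intro G a ha
      exact mem_sdiff.2 ⟨mem_univ a, disjoint_left.1 (VS.consistency G) ha⟩
    have hVcl : ∀ G : Finset H, VS.V (cl G) = VS.V G := by
      intro G
      exact VS.locality G (cl G) (hGcl G) sdiff_disjoint
    have hsub : ∀ G : Finset H, bas (cl G) ⊆ cl G := fun G => (hbas (cl G)).1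
    -- the class of G is the interval [bas (cl G), cl G]
    have hclass : ∀ G : Finset H,
        {F : Finset H | VS.V F = VS.V G} = cubeInterval (bas (cl G)) (cl G) := by
      intro G
      ext F
      constructor
      · intro hF
        have hF : VS.V F = VS.V G := hF
        have hFcl : F ⊆ cl G := by
          intro a ha
          exact mem_sdiff.2 ⟨mem_univ a, fun hv => disjoint_left.1 (VS.consistency F) ha (hF ▸ hv)⟩
        -- bas F is a basis of cl G, hence equals bas (cl G)
        have hbF : IsBasisOf VS.V (bas F) (cl G) :=
          ⟨(hbas F).1.trans hFcl, (hbas F).2.1.trans (hF.trans (hVcl G).symm),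
            fun B' hB' hVB' =>
              (hbas F).2.2 B' hB' (hVB'.trans ((hVcl G).trans hF.symm))⟩
        have : bas F = bas (cl G) := hbuniq (cl G) (bas F) hbF
        exact ⟨this ▸ (hbas F).1, hFcl⟩
      · rintro ⟨h1, h2⟩
        have hdis : Disjoint F (VS.V (bas (cl G))) := by
          rw [(hbas (cl G)).2.1, hVcl G]
          exact disjoint_left.2 fun a ha hv => (mem_sdiff.1 (h2 ha)).2 hv
        have := VS.locality (bas (cl G)) F h1 hdis
        show VS.V F = VS.V G
        rw [this, (hbas (cl G)).2.1, hVcl G]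
    refine ⟨⟨?_, ?_⟩, ?_⟩
    · rintro ⟨G, hG⟩
      have : G ∈ ({F : Finset H | VS.V F = VS.V G} : Set (Finset H)) := rfl
      rw [← hG] at this
      exact this
    · intro F
      refine ⟨{F' : Finset H | VS.V F' = VS.V F}, ⟨⟨F, rfl⟩, rfl⟩, ?_⟩
      rintro c ⟨⟨G, rfl⟩, hFc⟩
      have hFG : VS.V F = VS.V G := hFc
      ext F'
      exact ⟨fun h => (show VS.V F' = VS.V G from h).trans hFG.symm,
        fun h => (show VS.V F' = VS.V F from h).trans hFG⟩
    · rintro c ⟨G, rfl⟩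
      exact ⟨bas (cl G), cl G, hsub G, hclass G⟩
  · -- Direction 2: hypercube partition comes from a violator space
    intro P hP
    obtain ⟨⟨hne, huniq⟩, hint⟩ := hP
    have key : ∀ G : Finset H, ∃ A B : Finset H,
        A ⊆ B ∧ cubeInterval A B ∈ P ∧ G ∈ cubeInterval A B := by
      intro G
      obtain ⟨b, ⟨hbP, hGb⟩, -⟩ := huniq G
      obtain ⟨A, B, hAB, rfl⟩ := hint b hbP
      exact ⟨A, B, hAB, hbP, hGb⟩
    choose lo hi hsub hmemP hmem using key
    have uniq : ∀ {G A B : Finset H}, A ⊆ B → cubeInterval A B ∈ P →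
        G ∈ cubeInterval A B → lo G = A ∧ hi G = B := by
      intro G A B hAB hcP hGc
      obtain ⟨b, -, hb⟩ := huniq G
      have h1 : cubeInterval A B = b := hb _ ⟨hcP, hGc⟩
      have h2 : cubeInterval (lo G) (hi G) = b := hb _ ⟨hmemP G, hmem G⟩
      exact cubeInterval_endpoints (hsub G) hAB (h2.trans h1.symm)
    have top_mem : ∀ G : Finset H, hi G ∈ cubeInterval (lo G) (hi G) :=
      fun G => ⟨hsub G, subset_rfl⟩
    have hi_eq_lo : ∀ {F G : Finset H}, hi F = hi G → lo F = lo G := by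
      intro F G h
      have h1 := uniq (hsub F) (hmemP F) (top_mem F)
      have h2 := uniq (hsub G) (hmemP G) (show hi F ∈ cubeInterval (lo G) (hi G) from
        h ▸ top_mem G)
      exact h1.1.symm.trans h2.1
    have hVinj : ∀ {F G : Finset H}, (univ \ hi F : Finset H) = univ \ hi G → hi F = hi G := by
      intro F G h
      have := congrArg (fun s => (univ : Finset H) \ s) h
      simpa [Finset.sdiff_sdiff_eq_self (subset_univ _)] using this
    have hcons : ∀ G : Finset H, Disjoint G ((univ : Finset H) \ hi G) := by
      intro G
      exact disjoint_left.2 fun a ha hv => (mem_sdiff.1 hv).2 ((hmem G).2 ha)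
    have hloc : ∀ F G : Finset H, F ⊆ G → Disjoint G ((univ : Finset H) \ hi F) →
        (univ : Finset H) \ hi G = univ \ hi F := by
      intro F G hFG hd
      have hGhiF : G ⊆ hi F := by
        intro a ha
        by_contra hcon
        exact disjoint_left.1 hd ha (mem_sdiff.2 ⟨mem_univ a, hcon⟩)
      have := uniq (hsub F) (hmemP F) (show G ∈ cubeInterval (lo F) (hi F) from
        ⟨(hmem F).1.trans hFG, hGhiF⟩)
      rw [this.2]
    refine ⟨⟨fun G => univ \ hi G, hcons, hloc⟩, ?_, ?_, ?_⟩
    · intro G A B hAB hcP hGc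
      show (univ : Finset H) \ hi G = univ \ B
      rw [(uniq hAB hcP hGc).2]
    · -- nondegeneracy : unique basis is lo G
      intro G
      have hVlo : ∀ G : Finset H, (univ : Finset H) \ hi (lo G) = univ \ hi G := by
        intro G
        rw [(uniq (hsub G) (hmemP G) (⟨subset_rfl, hsub G⟩ :
          lo G ∈ cubeInterval (lo G) (hi G))).2]
      refine ⟨lo G, ⟨(hmem G).1, hVlo G, ?_⟩, ?_⟩
      · intro B' hB' hVB'
        have hh : hi B' = hi G := hVinj hVB'
        have hl : lo B' = lo G := hi_eq_lo hh
        exact (Finset.ssubset_def.1 hB').2 (hl ▸ (hmem B').1)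
      · rintro C ⟨hCG, hVC, hmin⟩
        have hh : hi C = hi G := hVinj hVC
        have hl : lo C = lo G := hi_eq_lo hh
        have hlC : lo G ⊆ C := hl ▸ (hmem C).1
        by_contra hne'
        have hss : lo G ⊂ C := Finset.ssubset_iff_subset_ne.2 ⟨hlC, fun h => hne' h.symm⟩
        exact hmin (lo G) hss (hVlo G)
    · -- violation pattern equals P
      have classEq : ∀ G : Finset H,
          {F : Finset H | (univ : Finset H) \ hi F = univ \ hi G} =
            cubeInterval (lo G) (hi G) := by
        intro G
        ext F
        constructor
        · intro hF
          have hh : hi F = hi G := hVinj hF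
          have hl : lo F = lo G := hi_eq_lo hh
          exact ⟨hl ▸ (hmem F).1, hh ▸ (hmem F).2⟩
        · intro hF
          show (univ : Finset H) \ hi F = univ \ hi G
          rw [(uniq (hsub G) (hmemP G) hF).2]
      ext c
      constructor
      · rintro ⟨G, rfl⟩
        have : {F : Finset H | (univ : Finset H) \ hi F = univ \ hi G} ∈ P :=
          (classEq G).symm ▸ hmemP G
        exact this
      · intro hc
        obtain ⟨A, B, hAB, rfl⟩ := hint c hc
        have hA : A ∈ cubeInterval A B := ⟨subset_rfl, hAB⟩
        have he := uniq hAB hc hA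
        refine ⟨A, ?_⟩
        rw [show ({F : Finset H | (univ : Finset H) \ hi F = univ \ hi A}) =
          cubeInterval (lo A) (hi A) from classEq A] at *
        rw [he.1, he.2]
end
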